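/- Equivalence of the value loss and the weighted classification loss up to a policy-free term: for measurable g : ℋ × {0,1} → (0,1], measurable Q : ℋ × {0,1} → ℝ, any measurable policy d : ℋ → {0,1}, and with W = Z(1, g, Q) − Z(0, g, Q), the following identity holds pointwise on Ω: Z(d, g, Q) = |W|·1{W > 0} + Z(0, g, Q) − |W|·1{d(H) ≠ 1{W > 0}}. In particular, the negative value loss −L̃(d) = Z(d, g, Q) and the negative weighted classification loss −|W|·1{d(H) ≠ 1{W > 0}} differ by a quantity not depending on d. -/
import Mathlib


open MeasureTheory

/-- Equivalence of the value loss and the weighted classification loss up to a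
policy-free term: with `W = Z(1, g, Q) − Z(0, g, Q)`, the identity
`Z(d, g, Q) = |W|·1{W > 0} + Z(0, g, Q) − |W|·1{d(H) ≠ 1{W > 0}}`
holds pointwise on `Ω`. -/
theorem value_loss_eq_classification_loss
    {Ω 𝓗 : Type*} [MeasurableSpace Ω] [MeasurableSpace 𝓗]
    (μ : Measure Ω) [IsProbabilityMeasure μ]
    (H : Ω → 𝓗) (hH : Measurable H)
    (A : Ω → Bool) (hA : Measurable A)
    (U : Ω → ℝ) (hU : Integrable U μ)
    (g : 𝓗 → Bool → ℝ) (hgm : ∀ a, Measurable fun h => g h a)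
    (hg01 : ∀ h a, g h a ∈ Set.Ioc (0:ℝ) 1)
    (Q : 𝓗 → Bool → ℝ) (hQm : ∀ a, Measurable fun h => Q h a)
    (d : 𝓗 → Bool) (hd : Measurable d)
    -- W = Z(1, g, Q) − Z(0, g, Q)
    (W : Ω → ℝ)
    (hW : ∀ ω, W ω =
      (Q (H ω) true
        + (if A ω = true then (1:ℝ) else 0) / g (H ω) (A ω) * (U ω - Q (H ω) (A ω)))
      - (Q (H ω) false
        + (if A ω = false then (1:ℝ) else 0) / g (H ω) (A ω) * (U ω - Q (H ω) (A ω)))) :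
    ∀ ω : Ω,
      Q (H ω) (d (H ω))
        + (if A ω = d (H ω) then (1:ℝ) else 0) / g (H ω) (A ω) * (U ω - Q (H ω) (A ω))
      = |W ω| * (if 0 < W ω then (1:ℝ) else 0)
        + (Q (H ω) false
            + (if A ω = false then (1:ℝ) else 0) / g (H ω) (A ω) * (U ω - Q (H ω) (A ω)))
        - |W ω| * (if d (H ω) ≠ (if 0 < W ω then true else false) then (1:ℝ) else 0) := by
  intro ω
  have hw := hW ω
  by_cases hpos : 0 < W ω
  · have habs : |W ω| = W ω := abs_of_pos hpos
    cases hdh : d (H ω) <;> simp [hdh, hpos, habs] <;> linarith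
  · have habs : |W ω| = -(W ω) := abs_of_nonpos (le_of_not_gt hpos)
    cases hdh : d (H ω) <;> simp [hdh, hpos, habs] <;> linarith
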